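/- Let F3 = [[1,0,0],[1,1,0],[1,1,1]] and G24 = F3 ⊗ F8. Let T3 be the 24×24 block matrix [[I8,0,I8],[0,I8,0],[0,0,T]]. Then the rows of T3·G24 indexed by A3 = {4,6,7,8,12,14,15,16,18,19,20,24} generate the (24,12,8) extended Golay code given by [[0,G8,G8],[G8,G8,0],[G8',G8',G8']]. -/

import Mathlib

open Matrix

/-- Generator matrix of the (8,4,4) Reed–Muller code. -/
def G8 : Matrix (Fin 4) (Fin 8) (ZMod 2) :=
  !![1,1,1,1,0,0,0,0; 1,1,0,0,1,1,0,0; 1,0,1,0,1,0,1,0; 1,1,1,1,1,1,1,1]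

/-- Column-permuted copy of G8 (permutation π3). -/
def G8' : Matrix (Fin 4) (Fin 8) (ZMod 2) :=
  !![0,1,1,1,1,0,0,0; 1,0,0,1,1,1,0,0; 1,1,0,0,1,0,1,0; 1,1,1,1,1,1,1,1]

/-- Assemble a 12×24 matrix from a 3×3 array of 4×8 blocks. -/
def build (M : Fin 3 → Fin 3 → Matrix (Fin 4) (Fin 8) (ZMod 2)) :
    Matrix (Fin 12) (Fin 24) (ZMod 2) :=
  Matrix.of fun i j =>
    M ⟨i.1 / 4, by have := i.2; omega⟩ ⟨j.1 / 8, by have := j.2; omega⟩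
      ⟨i.1 % 4, by omega⟩ ⟨j.1 % 8, by omega⟩

/-- Assemble a 24×24 matrix from a 3×3 array of 8×8 blocks. -/
def build8 (M : Fin 3 → Fin 3 → Matrix (Fin 8) (Fin 8) (ZMod 2)) :
    Matrix (Fin 24) (Fin 24) (ZMod 2) :=
  Matrix.of fun i j =>
    M ⟨i.1 / 8, by have := i.2; omega⟩ ⟨j.1 / 8, by have := j.2; omega⟩
      ⟨i.1 % 8, by omega⟩ ⟨j.1 % 8, by omega⟩

/-- The binary linear code generated by (the rows of) a matrix. -/
def code {k n : ℕ} (M : Matrix (Fin k) (Fin n) (ZMod 2)) :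
    Submodule (ZMod 2) (Fin n → ZMod 2) :=
  LinearMap.range M.vecMulLinear

/-- The cubing-construction generator matrix of the (24,12,8) extended Golay code. -/
def Ghat : Matrix (Fin 12) (Fin 24) (ZMod 2) :=
  build ![![G8, 0, G8], ![0, G8, G8], ![G8', G8', G8']]

/-- The 2×2 polar kernel. -/
def F2k : Matrix (Fin 2) (Fin 2) (ZMod 2) := !![1,0; 1,1]

/-- F8 = F2 ⊗ F2 ⊗ F2 (Kronecker product), written entrywise. -/
def F8 : Matrix (Fin 8) (Fin 8) (ZMod 2) :=
  Matrix.of fun i j =>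
    F2k ⟨i.1 / 4, by have := i.2; omega⟩ ⟨j.1 / 4, by have := j.2; omega⟩ *
    F2k ⟨i.1 / 2 % 2, by omega⟩ ⟨j.1 / 2 % 2, by omega⟩ *
    F2k ⟨i.1 % 2, by omega⟩ ⟨j.1 % 2, by omega⟩

/-- The 8×8 convolution matrix T of Proposition 1: identity plus extra ones at
(one-based) positions (2,3), (2,7), (3,4), (3,6), (4,5). -/
def T8 : Matrix (Fin 8) (Fin 8) (ZMod 2) :=
  Matrix.of fun i j =>
    if i = j ∨ (i = 1 ∧ j = 2) ∨ (i = 1 ∧ j = 6) ∨ (i = 2 ∧ j = 3) ∨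
       (i = 2 ∧ j = 5) ∨ (i = 3 ∧ j = 4) then 1 else 0

def F3c : Matrix (Fin 3) (Fin 3) (ZMod 2) := !![1,0,0; 1,1,0; 1,1,1]

/-- G24 = F3 ⊗ F8 for Kernel 3. -/
def G24c : Matrix (Fin 24) (Fin 24) (ZMod 2) :=
  Matrix.of fun i j =>
    F3c ⟨i.1 / 8, by have := i.2; omega⟩ ⟨j.1 / 8, by have := j.2; omega⟩ *
    F8 ⟨i.1 % 8, by omega⟩ ⟨j.1 % 8, by omega⟩

/-- T3 = [[I8,0,I8],[0,I8,0],[0,0,T]]. -/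
def T3 : Matrix (Fin 24) (Fin 24) (ZMod 2) :=
  build8 ![![1, 0, 1], ![0, 1, 0], ![0, 0, T8]]

set_option maxHeartbeats 16000000 in
/-- The rows of T3·G24 indexed by A3 (one-based {4,6,7,8,12,14,15,16,18,19,20,24})
generate the extended Golay code [[0,G8,G8],[G8,G8,0],[G8',G8',G8']]. -/
theorem kernel3_golay :
    Submodule.span (ZMod 2)
      ((fun i => (T3 * G24c) i) ''
        ({3, 5, 6, 7, 11, 13, 14, 15, 17, 18, 19, 23} : Set (Fin 24))) =
    code (build ![![0, G8, G8], ![G8, G8, 0], ![G8', G8', G8']]) := by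
  have h0 : (T3 * G24c) 3 = build ![![0, G8, G8], ![G8, G8, 0], ![G8', G8', G8']] 0 := by
    decide
  have h1 : (T3 * G24c) 5 = build ![![0, G8, G8], ![G8, G8, 0], ![G8', G8', G8']] 1 := by
    decide
  have h2 : (T3 * G24c) 6 = build ![![0, G8, G8], ![G8, G8, 0], ![G8', G8', G8']] 2 := by
    decide
  have h3 : (T3 * G24c) 7 = build ![![0, G8, G8], ![G8, G8, 0], ![G8', G8', G8']] 3 := by
    decide
  have h4 : (T3 * G24c) 11 = build ![![0, G8, G8], ![G8, G8, 0], ![G8', G8', G8']] 4 := by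
    decide
  have h5 : (T3 * G24c) 13 = build ![![0, G8, G8], ![G8, G8, 0], ![G8', G8', G8']] 5 := by
    decide
  have h6 : (T3 * G24c) 14 = build ![![0, G8, G8], ![G8, G8, 0], ![G8', G8', G8']] 6 := by
    decide
  have h7 : (T3 * G24c) 15 = build ![![0, G8, G8], ![G8, G8, 0], ![G8', G8', G8']] 7 := by
    decide
  have h8 : (T3 * G24c) 17 = build ![![0, G8, G8], ![G8, G8, 0], ![G8', G8', G8']] 10 := by
    decide
  have h9 : (T3 * G24c) 18 = build ![![0, G8, G8], ![G8, G8, 0], ![G8', G8', G8']] 9 := by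
    decide
  have h10 : (T3 * G24c) 19 = build ![![0, G8, G8], ![G8, G8, 0], ![G8', G8', G8']] 8 := by
    decide
  have h11 : (T3 * G24c) 23 = build ![![0, G8, G8], ![G8, G8, 0], ![G8', G8', G8']] 11 := by
    decide
  have hset : ((fun i => (T3 * G24c) i) ''
      ({3, 5, 6, 7, 11, 13, 14, 15, 17, 18, 19, 23} : Set (Fin 24))) =
      Set.range (fun k : Fin 12 =>
        build ![![0, G8, G8], ![G8, G8, 0], ![G8', G8', G8']] k) := by
    apply Set.eq_of_subset_of_subset
    · rintro x ⟨i, hi, rfl⟩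
      simp only [Set.mem_insert_iff, Set.mem_singleton_iff] at hi
      rcases hi with rfl|rfl|rfl|rfl|rfl|rfl|rfl|rfl|rfl|rfl|rfl|rfl
      · exact ⟨0, h0.symm⟩
      · exact ⟨1, h1.symm⟩
      · exact ⟨2, h2.symm⟩
      · exact ⟨3, h3.symm⟩
      · exact ⟨4, h4.symm⟩
      · exact ⟨5, h5.symm⟩
      · exact ⟨6, h6.symm⟩
      · exact ⟨7, h7.symm⟩
      · exact ⟨10, h8.symm⟩
      · exact ⟨9, h9.symm⟩
      · exact ⟨8, h10.symm⟩
      · exact ⟨11, h11.symm⟩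
    · rintro x ⟨k, rfl⟩
      fin_cases k
      · exact ⟨3, by simp, h0⟩
      · exact ⟨5, by simp, h1⟩
      · exact ⟨6, by simp, h2⟩
      · exact ⟨7, by simp, h3⟩
      · exact ⟨11, by simp, h4⟩
      · exact ⟨13, by simp, h5⟩
      · exact ⟨14, by simp, h6⟩
      · exact ⟨15, by simp, h7⟩
      · exact ⟨19, by simp, h10⟩
      · exact ⟨18, by simp, h9⟩
      · exact ⟨17, by simp, h8⟩
      · exact ⟨23, by simp, h11⟩
  rw [hset, code, range_vecMulLinear]
  rfl
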